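/- Let B ⊂ ℤ be finite with |B| ≥ 2, and let x, y, z be nonzero complex numbers. The 3×|B| matrix with rows (x^b)_{b∈B}, (y^b)_{b∈B}, (z^b)_{b∈B} has rank 1 (i.e., corank 2 among its 3 rows when |B| ≥ 3, meaning all 2×2 minors vanish) if and only if y/x and z/x are both k-th roots of unity for k = φ(B), the gcd of all differences of elements of B. In particular, if additionally x, y, z are pairwise distinct, such a configuration exists if and only if φ(B) ≥ 3. -/
import Mathlib
open Polynomial

noncomputable def phiSet (B : Finset ℤ) : ℤ :=
  (B ×ˢ B).gcd (fun p => p.2 - p.1)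

lemma key (w : ℂ) (hw : w ≠ 0) (B : Finset ℤ) :
    (∀ a ∈ B, ∀ b ∈ B, w ^ (b - a) = 1) ↔ w ^ phiSet B = 1 := by
  constructor
  · intro h
    set H : AddSubgroup ℤ :=
      { carrier := {n : ℤ | w ^ n = 1}
        zero_mem' := by simp
        add_mem' := by
          intro a b ha hb
          simp only [Set.mem_setOf_eq] at *
          rw [zpow_add₀ hw, ha, hb, one_mul]
        neg_mem' := by
          intro a ha
          simp only [Set.mem_setOf_eq] at *
          rw [zpow_neg, ha, inv_one] } with hH
    obtain ⟨g, hg⟩ := Int.subgroup_cyclic H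
    have hmem : ∀ n : ℤ, w ^ n = 1 ↔ g ∣ n := by
      intro n
      have : w ^ n = 1 ↔ n ∈ H := Iff.rfl
      rw [this, hg, AddSubgroup.mem_closure_singleton]
      constructor
      · rintro ⟨k, rfl⟩; exact Dvd.intro_left k (by simp [mul_comm, smul_eq_mul])
      · rintro ⟨k, rfl⟩; exact ⟨k, by simp [smul_eq_mul, mul_comm]⟩
    rw [hmem]
    apply Finset.dvd_gcd
    rintro ⟨a, b⟩ hab
    simp only [Finset.mem_product] at hab
    exact (hmem _).mp (h a hab.1 b hab.2)
  · intro h a ha b hb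
    have : phiSet B ∣ b - a :=
      Finset.gcd_dvd (by simp [Finset.mem_product, ha, hb] : ((a,b) : ℤ × ℤ) ∈ B ×ˢ B)
    obtain ⟨c, hc⟩ := this
    rw [hc, zpow_mul, h, one_zpow]

lemma pairchar (x y : ℂ) (hx : x ≠ 0) (hy : y ≠ 0) (a b : ℤ) :
    x ^ a * y ^ b = x ^ b * y ^ a ↔ (y / x) ^ (b - a) = 1 := by
  rw [div_zpow, div_eq_one_iff_eq (zpow_ne_zero _ hx), zpow_sub₀ hy, zpow_sub₀ hx,
    div_eq_div_iff (zpow_ne_zero _ hy) (zpow_ne_zero _ hx)]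
  constructor <;> intro h <;> linear_combination h

lemma part1 (B : Finset ℤ) (x y z : ℂ) (hx : x ≠ 0) (hy : y ≠ 0) (hz : z ≠ 0) :
    (∀ a ∈ B, ∀ b ∈ B,
        x ^ a * y ^ b = x ^ b * y ^ a ∧
        x ^ a * z ^ b = x ^ b * z ^ a ∧
        y ^ a * z ^ b = y ^ b * z ^ a) ↔
      ((y / x) ^ phiSet B = 1 ∧ (z / x) ^ phiSet B = 1) := by
  constructor
  · intro h
    constructor
    · rw [← key _ (div_ne_zero hy hx)]
      intro a ha b hb
      exact (pairchar x y hx hy a b).mp (h a ha b hb).1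
    · rw [← key _ (div_ne_zero hz hx)]
      intro a ha b hb
      exact (pairchar x z hx hz a b).mp (h a ha b hb).2.1
  · rintro ⟨h1, h2⟩ a ha b hb
    have hyz : (z / y) ^ phiSet B = 1 := by
      have : z / y = (z / x) / (y / x) := by field_simp
      rw [this, div_zpow, h1, h2]; norm_num
    refine ⟨(pairchar x y hx hy a b).mpr ?_, (pairchar x z hx hz a b).mpr ?_,
      (pairchar y z hy hz a b).mpr ?_⟩
    · exact ((key _ (div_ne_zero hy hx) B).mpr h1) a ha b hb
    · exact ((key _ (div_ne_zero hz hx) B).mpr h2) a ha b hb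
    · exact ((key _ (div_ne_zero hz hy) B).mpr hyz) a ha b hb

theorem stmt_5 (B : Finset ℤ) (hB : 2 ≤ B.card) :
    (∀ x y z : ℂ, x ≠ 0 → y ≠ 0 → z ≠ 0 →
      ((∀ a ∈ B, ∀ b ∈ B,
          x ^ a * y ^ b = x ^ b * y ^ a ∧
          x ^ a * z ^ b = x ^ b * z ^ a ∧
          y ^ a * z ^ b = y ^ b * z ^ a) ↔
        ((y / x) ^ phiSet B = 1 ∧ (z / x) ^ phiSet B = 1))) ∧
    ((∃ x y z : ℂ, x ≠ 0 ∧ y ≠ 0 ∧ z ≠ 0 ∧ x ≠ y ∧ x ≠ z ∧ y ≠ z ∧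
        ∀ a ∈ B, ∀ b ∈ B,
          x ^ a * y ^ b = x ^ b * y ^ a ∧
          x ^ a * z ^ b = x ^ b * z ^ a ∧
          y ^ a * z ^ b = y ^ b * z ^ a) ↔
      3 ≤ phiSet B) := by
  have hk0 : 0 ≤ phiSet B := by
    rw [phiSet, ← Finset.normalize_gcd, ← Int.abs_eq_normalize]
    exact abs_nonneg _
  have hk1 : 1 ≤ phiSet B := by
    rcases eq_or_lt_of_le hk0 with h | h
    · exfalso
      obtain ⟨a, ha, b, hb, hab⟩ := Finset.one_lt_card.mp (show 1 < B.card by omega)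
      have h0 := (Finset.gcd_eq_zero_iff.mp h.symm) (a, b)
        (by simp [Finset.mem_product, ha, hb])
      simp only at h0
      omega
    · omega
  refine ⟨fun x y z hx hy hz => part1 B x y z hx hy hz, ?_⟩
  constructor
  · rintro ⟨x, y, z, hx, hy, hz, hxy, hxz, hyz, h⟩
    obtain ⟨h1, h2⟩ := (part1 B x y z hx hy hz).mp h
    set n := (phiSet B).toNat with hn
    have hkn : (phiSet B : ℤ) = (n : ℤ) := (Int.toNat_of_nonneg hk0).symm
    have hnpos : 0 < n := by omega
    -- three distinct nth roots of unity
    have r1 : (1 : ℂ) ∈ nthRoots n (1:ℂ) := (mem_nthRoots hnpos).mpr (one_pow n)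
    have r2 : y / x ∈ nthRoots n (1:ℂ) := (mem_nthRoots hnpos).mpr (by
      have := h1; rw [hkn, zpow_natCast] at this; exact this)
    have r3 : z / x ∈ nthRoots n (1:ℂ) := (mem_nthRoots hnpos).mpr (by
      have := h2; rw [hkn, zpow_natCast] at this; exact this)
    have d12 : (1 : ℂ) ≠ y / x := fun h => hxy (by field_simp at h; rw [h])
    have d13 : (1 : ℂ) ≠ z / x := fun h => hxz (by field_simp at h; rw [h])
    have d23 : y / x ≠ z / x := fun h => hyz (by field_simp at h; exact h)
    have hsub : ({1, y / x, z / x} : Finset ℂ) ⊆ (nthRoots n (1:ℂ)).toFinset := by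
      intro w hw
      simp only [Finset.mem_insert, Finset.mem_singleton] at hw
      rcases hw with rfl | rfl | rfl <;> simpa using (by assumption)
    have hcard : ({1, y / x, z / x} : Finset ℂ).card = 3 := by
      rw [Finset.card_insert_of_notMem (by simp [d12, d13]),
        Finset.card_insert_of_notMem (by simp [d23])]
      rfl
    have : 3 ≤ n := by
      calc 3 = ({1, y / x, z / x} : Finset ℂ).card := hcard.symm
        _ ≤ (nthRoots n (1:ℂ)).toFinset.card := Finset.card_le_card hsub
        _ ≤ Multiset.card (nthRoots n (1:ℂ)) := Multiset.toFinset_card_le _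
        _ ≤ n := card_nthRoots n 1
    omega
  · intro h3
    set n := (phiSet B).toNat with hn
    have hkn : (phiSet B : ℤ) = (n : ℤ) := (Int.toNat_of_nonneg hk0).symm
    have hn3 : 3 ≤ n := by omega
    have hprim := Complex.isPrimitiveRoot_exp n (by omega)
    set ζ := Complex.exp (2 * Real.pi * Complex.I / n) with hζ
    have hζ0 : ζ ≠ 0 := hprim.ne_zero (by omega)
    have hζ1 : ζ ≠ 1 := hprim.ne_one (by omega)
    have hζ21 : ζ ^ 2 ≠ 1 := fun h => by
      have hd := hprim.dvd_of_pow_eq_one 2 h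
      have := Nat.le_of_dvd (by norm_num) hd
      omega
    have hζζ2 : ζ ≠ ζ ^ 2 := fun h => hζ1 (by
      have : ζ * 1 = ζ * ζ := by rw [mul_one, ← sq, ← h]
      exact ((mul_left_cancel₀ hζ0 this)).symm)
    refine ⟨1, ζ, ζ ^ 2, one_ne_zero, hζ0, pow_ne_zero 2 hζ0, fun h => hζ1 h.symm,
      fun h => hζ21 h.symm, hζζ2, ?_⟩
    apply (part1 B 1 ζ (ζ ^ 2) one_ne_zero hζ0 (pow_ne_zero 2 hζ0)).mpr
    have hz : ζ ^ (phiSet B) = 1 := by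
      rw [hkn, zpow_natCast, hprim.pow_eq_one]
    constructor
    · rw [div_one, hz]
    · rw [div_one, ← zpow_natCast ζ 2, ← zpow_mul, mul_comm, zpow_mul, hz, one_zpow]
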